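/- arXiv:2507.16301 — 3 statements merged into one kernel-verified Lean document; each statement's English description precedes it below -/
import Mathlib

section
/- Let G be a connected simple graph of order n ≥ 4 and let C(G) be its central graph, with V1 the set of original vertices and V2 the set of subdivided vertices. Then every automorphism φ of C(G) satisfies φ(V1) = V1 and φ(V2) = V2. -/
open SimpleGraph

/-- The subdivision graph `S(G)`: each edge `{u,v}` of `G` is replaced by a new
vertex (the element of `G.edgeSet`) adjacent to both `u` and `v`. -/
def subdivisionGraph {V : Type*} (G : SimpleGraph V) : SimpleGraph (V ⊕ G.edgeSet) where
  Adj x y :=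
    match x, y with
    | Sum.inl u, Sum.inr e => u ∈ (e : Sym2 V)
    | Sum.inr e, Sum.inl u => u ∈ (e : Sym2 V)
    | _, _ => False
  symm := ⟨by rintro (u | e) (v | f) h <;> simp_all⟩
  loopless := ⟨by rintro (u | e) h <;> simp_all⟩

/-- The central graph `C(G)`: obtained from the subdivision graph `S(G)` by joining
every pair of distinct vertices of `G` that are non-adjacent in `G`. -/
def centralGraph {V : Type*} (G : SimpleGraph V) : SimpleGraph (V ⊕ G.edgeSet) where
  Adj x y :=
    match x, y with
    | Sum.inl u, Sum.inl v => u ≠ v ∧ ¬ G.Adj u v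
    | Sum.inl u, Sum.inr e => u ∈ (e : Sym2 V)
    | Sum.inr e, Sum.inl u => u ∈ (e : Sym2 V)
    | Sum.inr _, Sum.inr _ => False
  symm := by
    constructor
    rintro (u | e) (v | f) h
    · exact ⟨h.1.symm, fun a => h.2 a.symm⟩
    · exact h
    · exact h
    · exact h
  loopless := by
    constructor
    rintro (u | e) h
    · exact h.1 rfl
    · exact h

/-- The middle graph `M(G)`: obtained from the subdivision graph `S(G)` by joining
each pair of distinct subdivided vertices corresponding to adjacent edges of `G`. -/
def middleGraph {V : Type*} (G : SimpleGraph V) : SimpleGraph (V ⊕ G.edgeSet) where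
  Adj x y :=
    match x, y with
    | Sum.inl u, Sum.inr e => u ∈ (e : Sym2 V)
    | Sum.inr e, Sum.inl u => u ∈ (e : Sym2 V)
    | Sum.inr e, Sum.inr f => e ≠ f ∧ ∃ u, u ∈ (e : Sym2 V) ∧ u ∈ (f : Sym2 V)
    | Sum.inl _, Sum.inl _ => False
  symm := by
    constructor
    rintro (u | e) (v | f) h
    · exact h
    · exact h
    · exact h
    · exact ⟨h.1.symm, h.2.imp fun u hu => ⟨hu.2, hu.1⟩⟩
  loopless := by
    constructor
    rintro (u | e) h
    · exact h
    · exact h.1 rfl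

/-- The line graph `L(G)`: vertices are the edges of `G`, two distinct edges being
adjacent when they share an endpoint. -/
def lineG {V : Type*} (G : SimpleGraph V) : SimpleGraph G.edgeSet where
  Adj e f := e ≠ f ∧ ∃ u, u ∈ (e : Sym2 V) ∧ u ∈ (f : Sym2 V)
  symm := ⟨fun e f h => ⟨h.1.symm, h.2.imp fun u hu => ⟨hu.2, hu.1⟩⟩⟩
  loopless := ⟨fun e h => h.1 rfl⟩

/-- The endline graph `G⁺`: to each vertex `v` of `G` we attach a new pendant
vertex; `Sum.inl` is the copy of `V(G)` and `Sum.inr` are the new vertices. -/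
def endlineGraph {V : Type*} (G : SimpleGraph V) : SimpleGraph (V ⊕ V) where
  Adj x y :=
    match x, y with
    | Sum.inl u, Sum.inl v => G.Adj u v
    | Sum.inl u, Sum.inr v => u = v
    | Sum.inr u, Sum.inl v => u = v
    | Sum.inr _, Sum.inr _ => False
  symm := by
    constructor
    rintro (u | u) (v | v) h
    · exact h.symm
    · exact h.symm
    · exact h.symm
    · exact h
  loopless := by
    constructor
    rintro (u | u) h
    · exact G.irrefl h
    · exact h

/-- The join `G₁ + G₂` of two vertex-disjoint graphs: their disjoint union together
with all edges between the two vertex sets. -/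
def joinGraph {V₁ V₂ : Type*} (G₁ : SimpleGraph V₁) (G₂ : SimpleGraph V₂) :
    SimpleGraph (V₁ ⊕ V₂) where
  Adj x y :=
    match x, y with
    | Sum.inl u, Sum.inl v => G₁.Adj u v
    | Sum.inr u, Sum.inr v => G₂.Adj u v
    | Sum.inl _, Sum.inr _ => True
    | Sum.inr _, Sum.inl _ => True
  symm := by
    constructor
    rintro (u | u) (v | v) h
    · exact h.symm
    · trivial
    · trivial
    · exact h.symm
  loopless := by
    constructor
    rintro (u | u) h
    · exact G₁.irrefl h
    · exact G₂.irrefl h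

/-- The maximum degree `Δ(H)` of a graph (as a supremum of cardinalities of
neighborhoods, which agrees with the usual maximum degree for finite graphs). -/
noncomputable def maxDeg {W : Type*} (H : SimpleGraph W) : ℕ :=
  sSup {k | ∃ v : W, k = (H.neighborSet v).ncard}

/-- A graph is regular if all vertices have the same degree. -/
def IsRegularGraph {W : Type*} (H : SimpleGraph W) : Prop :=
  ∀ u v : W, (H.neighborSet u).ncard = (H.neighborSet v).ncard

/-- The distinguishing number `D(H)`: the least `d` such that `H` admits a vertex
coloring with `d` colors preserved only by the identity automorphism. -/
noncomputable def distinguishingNumber {W : Type*} (H : SimpleGraph W) : ℕ :=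
  sInf {d | ∃ c : W → Fin d, ∀ φ : H ≃g H, (∀ v, c (φ v) = c v) → ∀ v, φ v = v}

/-- The distinguishing index `D'(H)`: the least `d` such that `H` admits an edge
coloring with `d` colors preserved only by the identity automorphism. -/
noncomputable def distinguishingIndex {W : Type*} (H : SimpleGraph W) : ℕ :=
  sInf {d | ∃ c : H.edgeSet → Fin d,
    ∀ φ : H ≃g H, (∀ e, c (φ.mapEdgeSet e) = c e) → ∀ v, φ v = v}

/-- A proper total coloring of `H` with `d` colors: adjacent vertices, adjacent
edges, and incident vertex/edge pairs receive distinct colors. -/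
def IsProperTotalColoring {W : Type*} (H : SimpleGraph W) {d : ℕ}
    (f : W ⊕ H.edgeSet → Fin d) : Prop :=
  (∀ u v : W, H.Adj u v → f (Sum.inl u) ≠ f (Sum.inl v)) ∧
  (∀ e e' : H.edgeSet, e ≠ e' → (∃ u, u ∈ (e : Sym2 W) ∧ u ∈ (e' : Sym2 W)) →
    f (Sum.inr e) ≠ f (Sum.inr e')) ∧
  (∀ (v : W) (e : H.edgeSet), v ∈ (e : Sym2 W) → f (Sum.inl v) ≠ f (Sum.inr e))

/-- An automorphism `φ` preserves a total coloring `f`. -/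
def PreservesTotalColoring {W : Type*} (H : SimpleGraph W) {d : ℕ}
    (f : W ⊕ H.edgeSet → Fin d) (φ : H ≃g H) : Prop :=
  (∀ v : W, f (Sum.inl (φ v)) = f (Sum.inl v)) ∧
  (∀ e : H.edgeSet, f (Sum.inr (φ.mapEdgeSet e)) = f (Sum.inr e))

/-- The total chromatic number `χ''(H)`. -/
noncomputable def totalChromaticNumber {W : Type*} (H : SimpleGraph W) : ℕ :=
  sInf {d | ∃ f : W ⊕ H.edgeSet → Fin d, IsProperTotalColoring H f}

/-- The total distinguishing chromatic number `χ''_D(H)`: the least `d` such that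
`H` has a proper total coloring with `d` colors preserved only by the identity. -/
noncomputable def totalDistinguishingChromaticNumber {W : Type*} (H : SimpleGraph W) : ℕ :=
  sInf {d | ∃ f : W ⊕ H.edgeSet → Fin d, IsProperTotalColoring H f ∧
    ∀ φ : H ≃g H, PreservesTotalColoring H f φ → ∀ v, φ v = v}

/-- The color class `C_H(u)` of a vertex under a total coloring: the color of `u`
together with the colors of the edges incident to `u`. -/
def totalColorClass {W : Type*} (H : SimpleGraph W) {d : ℕ}
    (f : W ⊕ H.edgeSet → Fin d) (u : W) : Set (Fin d) :=
  {f (Sum.inl u)} ∪ {x | ∃ e : H.edgeSet, u ∈ (e : Sym2 W) ∧ x = f (Sum.inr e)}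

/-- An AVD-total coloring: a proper total coloring in which adjacent vertices have
distinct color classes. -/
def IsAVDTotalColoring {W : Type*} (H : SimpleGraph W) {d : ℕ}
    (f : W ⊕ H.edgeSet → Fin d) : Prop :=
  IsProperTotalColoring H f ∧
  ∀ u v : W, H.Adj u v → totalColorClass H f u ≠ totalColorClass H f v

/-- The AVD-total chromatic number `χ''ₐ(H)`. -/
noncomputable def avdTotalChromaticNumber {W : Type*} (H : SimpleGraph W) : ℕ :=
  sInf {d | ∃ f : W ⊕ H.edgeSet → Fin d, IsAVDTotalColoring H f}

/-- A total dominator coloring: a proper vertex coloring such that every vertex is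
adjacent to every vertex of some (nonempty) color class. -/
def IsTotalDominatorColoring {W : Type*} (H : SimpleGraph W) {d : ℕ}
    (c : W → Fin d) : Prop :=
  (∀ u v : W, H.Adj u v → c u ≠ c v) ∧
  (∀ v : W, ∃ i : Fin d, (∃ w, c w = i) ∧ ∀ w, c w = i → H.Adj v w)

/-- The total dominator chromatic number `χᵗ_d(H)`. -/
noncomputable def tdChromaticNumber {W : Type*} (H : SimpleGraph W) : ℕ :=
  sInf {d | ∃ c : W → Fin d, IsTotalDominatorColoring H c}

lemma key_inl {V : Type*} [Fintype V] (G : SimpleGraph V) (hn : 4 ≤ Fintype.card V)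
    (φ : centralGraph G ≃g centralGraph G) (u : V) :
    ∃ v, φ (Sum.inl u) = Sum.inl v := by
  classical
  cases h : φ (Sum.inl u) with
  | inl v => exact ⟨v, rfl⟩
  | inr e =>
    exfalso
    have h3 : 3 ≤ (Finset.univ.erase u).card := by
      rw [Finset.card_erase_of_mem (Finset.mem_univ u), Finset.card_univ]; omega
    obtain ⟨t, hts, ht3⟩ := Finset.exists_subset_card_eq h3
    obtain ⟨a, b, c, hab, hac, hbc, rfl⟩ := Finset.card_eq_three.mp ht3
    have hau : a ≠ u := Finset.ne_of_mem_erase (hts (by simp))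
    have hbu : b ≠ u := Finset.ne_of_mem_erase (hts (by simp))
    have hcu : c ≠ u := Finset.ne_of_mem_erase (hts (by simp))
    set F : V → V ⊕ G.edgeSet := fun v =>
      if hv : G.Adj u v then Sum.inr (⟨s(u,v), hv⟩ : G.edgeSet) else Sum.inl v with hF
    have hadjF : ∀ v, v ≠ u → (centralGraph G).Adj (Sum.inl u) (F v) := by
      intro v hv
      rw [hF]
      by_cases hav : G.Adj u v
      · simp only [hav, dif_pos]
        show u ∈ (s(u,v) : Sym2 V)
        simp
      · simp only [hav, dif_neg, not_false_iff]
        exact ⟨fun h' => hv h'.symm, hav⟩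
    have hinjF : ∀ v w, v ≠ u → F v = F w → v = w := by
      intro v w hv hFeq
      rw [hF] at hFeq
      dsimp at hFeq
      split_ifs at hFeq
      all_goals simp only [Sum.inr.injEq, Sum.inl.injEq, Subtype.mk.injEq,
        Sym2.eq_iff, reduceCtorEq] at hFeq
      · rcases Sym2.eq_iff.mp (congrArg Subtype.val hFeq) with ⟨-, rfl⟩ | ⟨rfl, rfl⟩
        · rfl
        · exact absurd rfl hv
      · exact hFeq
    have himg : ∀ v, v ≠ u → ∃ w, w ∈ (e : Sym2 V) ∧ φ (F v) = Sum.inl w := by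
      intro v hv
      have hadj : (centralGraph G).Adj (φ (Sum.inl u)) (φ (F v)) :=
        φ.map_adj_iff.mpr (hadjF v hv)
      rw [h] at hadj
      cases hw : φ (F v) with
      | inl w => rw [hw] at hadj; exact ⟨w, hadj, rfl⟩
      | inr f => rw [hw] at hadj; exact absurd hadj (by simp [centralGraph])
    obtain ⟨wa, hwa, hfa⟩ := himg a hau
    obtain ⟨wb, hwb, hfb⟩ := himg b hbu
    obtain ⟨wc, hwc, hfc⟩ := himg c hcu
    have hne : ∀ v w x y, v ≠ u → v ≠ w → φ (F v) = Sum.inl x → φ (F w) = Sum.inl y →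
        x ≠ y := by
      intro v w x y hv hvw hx hy hxy
      apply hvw
      apply hinjF v w hv
      apply φ.injective
      rw [hx, hy, hxy]
    have h1 : wa ≠ wb := hne a b wa wb hau hab hfa hfb
    have h2 : wa ≠ wc := hne a c wa wc hau hac hfa hfc
    have h3' : wb ≠ wc := hne b c wb wc hbu hbc hfb hfc
    obtain ⟨es, he⟩ := e
    induction es using Sym2.ind with
    | _ x y =>
      simp only [Sym2.mem_iff] at hwa hwb hwc
      rcases hwa with rfl | rfl <;> rcases hwb with rfl | rfl <;>
        rcases hwc with rfl | rfl <;>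
        first
        | exact h1 rfl
        | exact h2 rfl
        | exact h3' rfl

/-- For a connected graph `G` of order at least `4`, every
automorphism of `C(G)` maps original vertices to original vertices and
subdivided vertices to subdivided vertices. -/
theorem stmt_1 {V : Type*} [Fintype V] (G : SimpleGraph V)
    (hconn : G.Connected) (hn : 4 ≤ Fintype.card V)
    (φ : centralGraph G ≃g centralGraph G) :
    (∀ u : V, ∃ v : V, φ (Sum.inl u) = Sum.inl v) ∧
    (∀ e : G.edgeSet, ∃ e' : G.edgeSet, φ (Sum.inr e) = Sum.inr e') := by
  refine ⟨key_inl G hn φ, ?_⟩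
  intro e
  cases h : φ (Sum.inr e) with
  | inl v =>
    exfalso
    obtain ⟨w, hw⟩ := key_inl G hn φ.symm v
    have : φ.symm (Sum.inl v) = Sum.inr e := by
      rw [← h]; exact φ.symm_apply_apply _
    rw [hw] at this
    exact Sum.inl_ne_inr this
  | inr e' => exact ⟨e', rfl⟩
end

section
/- Let G be a connected simple graph of order n ≥ 3 and let M(G) be its middle graph. Then Aut(G) ≅ Aut(M(G)) as abstract groups. -/
open SimpleGraph

namespace MGAux
section Aux
variable {V : Type*} {G : SimpleGraph V}

variable {V : Type*} {G : SimpleGraph V}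

lemma mapEdgeSet_coe (σ : G ≃g G) (e : G.edgeSet) :
    ((σ.mapEdgeSet e : G.edgeSet) : Sym2 V) = Sym2.map σ e := rfl

lemma edge_rep (e : G.edgeSet) : ∃ a b, G.Adj a b ∧ (e : Sym2 V) = s(a, b) := by
  obtain ⟨z, hz⟩ := e
  induction z using Sym2.ind with
  | _ a b => exact ⟨a, b, hz, rfl⟩

lemma mem_map_equiv (σ : V ≃ V) (z : Sym2 V) (a : V) :
    σ a ∈ Sym2.map σ z ↔ a ∈ z := by
  rw [Sym2.mem_map]
  constructor
  · rintro ⟨b, hb, hba⟩; rwa [σ.injective hba] at hb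
  · exact fun h => ⟨a, h, rfl⟩

def lift (σ : G ≃g G) : middleGraph G ≃g middleGraph G where
  toEquiv := Equiv.sumCongr σ.toEquiv σ.mapEdgeSet
  map_rel_iff' := by
    rintro (u | e) (v | f)
    · exact Iff.rfl
    · show (σ u) ∈ (σ.mapEdgeSet f : Sym2 V) ↔ _
      rw [mapEdgeSet_coe]
      exact mem_map_equiv σ.toEquiv _ u
    · show (σ v) ∈ (σ.mapEdgeSet e : Sym2 V) ↔ _
      rw [mapEdgeSet_coe]
      exact mem_map_equiv σ.toEquiv _ v
    · show σ.mapEdgeSet e ≠ σ.mapEdgeSet f ∧ _ ↔ _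
      rw [mapEdgeSet_coe, mapEdgeSet_coe]
      constructor
      · rintro ⟨hne, u, hu, hu'⟩
        refine ⟨fun h => hne (by rw [h]), σ.symm u, ?_, ?_⟩
        · have := (mem_map_equiv σ.toEquiv e (σ.symm u))
          simpa using this.mp (by simpa using hu)
        · have := (mem_map_equiv σ.toEquiv f (σ.symm u))
          simpa using this.mp (by simpa using hu')
      · rintro ⟨hne, u, hu, hu'⟩
        exact ⟨fun h => hne (σ.mapEdgeSet.injective h),
          σ u, (mem_map_equiv σ.toEquiv e u).mpr hu, (mem_map_equiv σ.toEquiv f u).mpr hu'⟩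

lemma lift_inl (σ : G ≃g G) (u : V) : lift σ (Sum.inl u) = Sum.inl (σ u) := rfl
lemma lift_inr (σ : G ≃g G) (e : G.edgeSet) :
    lift σ (Sum.inr e) = Sum.inr (σ.mapEdgeSet e) := rfl

lemma lift_mul (σ τ : G ≃g G) : lift (σ * τ) = lift σ * lift τ := by
  apply RelIso.ext
  rintro (u | e)
  · rfl
  · show Sum.inr ((σ * τ).mapEdgeSet e) = Sum.inr (σ.mapEdgeSet (τ.mapEdgeSet e))
    congr 1
    apply Subtype.ext
    rw [mapEdgeSet_coe, mapEdgeSet_coe, mapEdgeSet_coe, Sym2.map_map]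
    rfl



lemma maps_inl (ψ : middleGraph G ≃g middleGraph G) (u : V) :
    ∃ v, ψ (Sum.inl u) = Sum.inl v := by
  cases h : ψ (Sum.inl u) with
  | inl v => exact ⟨v, rfl⟩
  | inr f =>
    exfalso
    obtain ⟨a, b, hab, hf⟩ := edge_rep f
    have hmem : ∀ c : V, c ∈ (f : Sym2 V) → (middleGraph G).Adj (Sum.inl u) (ψ.symm (Sum.inl c)) := by
      intro c hc
      refine ψ.map_rel_iff.mp ?_
      rw [h, ψ.apply_symm_apply]
      exact hc
    have ha := hmem a (by rw [hf]; exact Sym2.mem_mk_left a b)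
    have hb := hmem b (by rw [hf]; exact Sym2.mem_mk_right a b)
    cases hxa : ψ.symm (Sum.inl a) with
    | inl v => rw [hxa] at ha; exact ha
    | inr e1 =>
      cases hxb : ψ.symm (Sum.inl b) with
      | inl v => rw [hxb] at hb; exact hb
      | inr e2 =>
        rw [hxa] at ha; rw [hxb] at hb
        have hne : e1 ≠ e2 := by
          rintro rfl
          exact hab.ne (Sum.inl_injective (ψ.symm.injective (hxa.trans hxb.symm)))
        have hadj : (middleGraph G).Adj (Sum.inr e1) (Sum.inr e2) := ⟨hne, u, ha, hb⟩
        have : (middleGraph G).Adj (Sum.inl a) (Sum.inl b) := by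
          have h2 : (middleGraph G).Adj (ψ (ψ.symm (Sum.inl a))) (ψ (ψ.symm (Sum.inl b))) :=
            ψ.map_rel_iff.mpr (by rw [hxa, hxb]; exact hadj)
          rwa [ψ.apply_symm_apply, ψ.apply_symm_apply] at h2
        exact this

lemma maps_inr (ψ : middleGraph G ≃g middleGraph G) (e : G.edgeSet) :
    ∃ f, ψ (Sum.inr e) = Sum.inr f := by
  cases h : ψ (Sum.inr e) with
  | inr f => exact ⟨f, rfl⟩
  | inl v =>
    exfalso
    obtain ⟨w, hw⟩ := maps_inl ψ.symm v
    have : Sum.inr e = Sum.inl w := by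
      rw [← hw, ← h, ψ.symm_apply_apply]
    exact Sum.inr_ne_inl this

noncomputable def vmap (ψ : middleGraph G ≃g middleGraph G) : V → V :=
  fun u => (maps_inl ψ u).choose

lemma vmap_spec (ψ : middleGraph G ≃g middleGraph G) (u : V) :
    ψ (Sum.inl u) = Sum.inl (vmap ψ u) := (maps_inl ψ u).choose_spec

lemma vmap_left_inv (ψ : middleGraph G ≃g middleGraph G) (u : V) :
    vmap ψ.symm (vmap ψ u) = u := by
  have := vmap_spec ψ.symm (vmap ψ u)
  rw [← vmap_spec ψ u, ψ.symm_apply_apply] at this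
  exact (Sum.inl_injective this).symm

noncomputable def vequiv (ψ : middleGraph G ≃g middleGraph G) : V ≃ V where
  toFun := vmap ψ
  invFun := vmap ψ.symm
  left_inv := vmap_left_inv ψ
  right_inv := fun u => vmap_left_inv ψ.symm u

lemma vmap_adj (ψ : middleGraph G ≃g middleGraph G) {a b : V} (h : G.Adj a b) :
    G.Adj (vmap ψ a) (vmap ψ b) := by
  set e : G.edgeSet := ⟨s(a, b), h⟩ with he
  obtain ⟨f, hf⟩ := maps_inr ψ e
  have hma : (middleGraph G).Adj (Sum.inl (vmap ψ a)) (Sum.inr f) := by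
    rw [← vmap_spec, ← hf]
    exact ψ.map_rel_iff.mpr (Sym2.mem_mk_left a b)
  have hmb : (middleGraph G).Adj (Sum.inl (vmap ψ b)) (Sum.inr f) := by
    rw [← vmap_spec, ← hf]
    exact ψ.map_rel_iff.mpr (Sym2.mem_mk_right a b)
  have hne : vmap ψ a ≠ vmap ψ b := by
    intro hh
    exact h.ne ((vequiv ψ).injective hh)
  have hfeq : (f : Sym2 V) = s(vmap ψ a, vmap ψ b) :=
    ((Sym2.mem_and_mem_iff hne).mp ⟨hma, hmb⟩)
  have := f.2
  rwa [hfeq, SimpleGraph.mem_edgeSet] at this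

noncomputable def vgiso (ψ : middleGraph G ≃g middleGraph G) : G ≃g G where
  toEquiv := vequiv ψ
  map_rel_iff' := by
    intro a b
    constructor
    · intro h
      have := vmap_adj ψ.symm h
      rwa [show vmap ψ.symm (vequiv ψ a) = a from vmap_left_inv ψ a,
        show vmap ψ.symm (vequiv ψ b) = b from vmap_left_inv ψ b] at this
    · exact vmap_adj ψ


lemma lift_vgiso (ψ : middleGraph G ≃g middleGraph G) : lift (vgiso ψ) = ψ := by
  apply RelIso.ext
  rintro (u | e)
  · exact (vmap_spec ψ u).symm
  · obtain ⟨f, hf⟩ := maps_inr ψ e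
    rw [hf, lift_inr]
    congr 1
    apply Subtype.ext
    rw [mapEdgeSet_coe]
    obtain ⟨a, b, hab, he⟩ := edge_rep e
    have hma : (middleGraph G).Adj (Sum.inl (vmap ψ a)) (Sum.inr f) := by
      rw [← vmap_spec, ← hf]
      exact ψ.map_rel_iff.mpr (show a ∈ (e : Sym2 V) by rw [he]; exact Sym2.mem_mk_left a b)
    have hmb : (middleGraph G).Adj (Sum.inl (vmap ψ b)) (Sum.inr f) := by
      rw [← vmap_spec, ← hf]
      exact ψ.map_rel_iff.mpr (show b ∈ (e : Sym2 V) by rw [he]; exact Sym2.mem_mk_right a b)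
    have hne : vmap ψ a ≠ vmap ψ b := fun hh => hab.ne ((vequiv ψ).injective hh)
    have hfeq : (f : Sym2 V) = s(vmap ψ a, vmap ψ b) :=
      (Sym2.mem_and_mem_iff hne).mp ⟨hma, hmb⟩
    rw [hfeq, he]
    rfl

end Aux
end MGAux

/-- For a connected graph `G` of order at least `3`,
`Aut(G) ≅ Aut(M(G))` as abstract groups. -/
theorem stmt_4 {V : Type*} [Fintype V] (G : SimpleGraph V)
    (hconn : G.Connected) (hn : 3 ≤ Fintype.card V) :
    Nonempty ((G ≃g G) ≃* (middleGraph G ≃g middleGraph G)) := by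
  classical
  let Φ : (G ≃g G) →* (middleGraph G ≃g middleGraph G) :=
    { toFun := MGAux.lift
      map_one' := by
        apply RelIso.ext
        rintro (u | e)
        · rfl
        · show Sum.inr ((1 : G ≃g G).mapEdgeSet e) = Sum.inr e
          congr 1
          apply Subtype.ext
          rw [MGAux.mapEdgeSet_coe]
          exact congrFun Sym2.map_id (e : Sym2 V)
      map_mul' := MGAux.lift_mul }
  refine ⟨MulEquiv.ofBijective Φ ⟨?_, ?_⟩⟩
  · intro σ τ h
    apply RelIso.ext
    intro v
    have h2 : MGAux.lift σ (Sum.inl v) = MGAux.lift τ (Sum.inl v) :=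
      DFunLike.congr_fun (show MGAux.lift σ = MGAux.lift τ from h) (Sum.inl v)
    exact Sum.inl_injective h2
  · intro ψ
    exact ⟨MGAux.vgiso ψ, MGAux.lift_vgiso ψ⟩
end

section
/- Let G be a connected simple graph of order n ≥ 4 with maximum degree Δ(G). Then the distinguishing index of the central graph satisfies D'(C(G)) ≤ ⌈√Δ(G)⌉. -/
open SimpleGraph

section StmtSixAux

open Sum

namespace StmtSix

variable {V : Type*}

/-- Down-neighbours of `u` with respect to BFS from `r`. -/
def DD (G : SimpleGraph V) (r u : V) : Set V :=
  {v | G.Adj u v ∧ G.dist r v = G.dist r u + 1}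

lemma mem_DD {G : SimpleGraph V} {r u v : V} :
    v ∈ DD G r u ↔ G.Adj u v ∧ G.dist r v = G.dist r u + 1 := Iff.rfl

lemma not_mem_DD_of_mem {G : SimpleGraph V} {r u v : V} (h : v ∈ DD G r u) :
    u ∉ DD G r v := by
  intro h'
  have h1 := h.2
  have h2 := h'.2
  omega

lemma central_adj_ll {G : SimpleGraph V} {u v : V} :
    (centralGraph G).Adj (Sum.inl u) (Sum.inl v) ↔ u ≠ v ∧ ¬ G.Adj u v := Iff.rfl

lemma central_adj_lr {G : SimpleGraph V} {u : V} {e : G.edgeSet} :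
    (centralGraph G).Adj (Sum.inl u) (Sum.inr e) ↔ u ∈ (e : Sym2 V) := Iff.rfl

lemma central_adj_rl {G : SimpleGraph V} {u : V} {e : G.edgeSet} :
    (centralGraph G).Adj (Sum.inr e) (Sum.inl u) ↔ u ∈ (e : Sym2 V) := Iff.rfl

lemma central_not_adj_rr {G : SimpleGraph V} {e f : G.edgeSet} :
    ¬ (centralGraph G).Adj (Sum.inr e) (Sum.inr f) := fun h => h

lemma exists_three [Fintype V] (hn : 4 ≤ Fintype.card V) (u : V) :
    ∃ a b c : V, a ≠ u ∧ b ≠ u ∧ c ≠ u ∧ a ≠ b ∧ a ≠ c ∧ b ≠ c := by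
  classical
  have h1 : 3 ≤ (Finset.univ.erase u).card := by
    rw [Finset.card_erase_of_mem (Finset.mem_univ u), Finset.card_univ]; omega
  obtain ⟨a, ha⟩ := Finset.card_pos.mp (by omega : 0 < (Finset.univ.erase u).card)
  have h2 : 2 ≤ ((Finset.univ.erase u).erase a).card := by
    rw [Finset.card_erase_of_mem ha]; omega
  obtain ⟨b, hb⟩ := Finset.card_pos.mp
    (by omega : 0 < ((Finset.univ.erase u).erase a).card)
  have h3 : 1 ≤ (((Finset.univ.erase u).erase a).erase b).card := by
    rw [Finset.card_erase_of_mem hb]; omega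
  obtain ⟨c, hc⟩ := Finset.card_pos.mp
    (by omega : 0 < (((Finset.univ.erase u).erase a).erase b).card)
  simp only [Finset.mem_erase] at ha hb hc
  exact ⟨a, b, c, ha.1, hb.2.1, hc.2.2.1, fun h => hb.1 h.symm,
    fun h => hc.2.1 h.symm, fun h => hc.1 h.symm⟩

lemma exists_ne_pair [Fintype V] (hn : 3 ≤ Fintype.card V) (a b : V) :
    ∃ c : V, c ≠ a ∧ c ≠ b := by
  classical
  have h1 : 1 ≤ ((Finset.univ.erase a).erase b).card := by
    have := Finset.card_erase_le (s := Finset.univ.erase a) (a := b)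
    have h2 : (Finset.univ.erase a).card = Fintype.card V - 1 := by
      rw [Finset.card_erase_of_mem (Finset.mem_univ a), Finset.card_univ]
    have h3 : (Finset.univ.erase a).card - 1 ≤ ((Finset.univ.erase a).erase b).card :=
      Finset.pred_card_le_card_erase
    omega
  obtain ⟨c, hc⟩ := Finset.card_pos.mp (by omega : 0 < ((Finset.univ.erase a).erase b).card)
  simp only [Finset.mem_erase] at hc
  exact ⟨c, hc.2.1, hc.1⟩


lemma dist_iso {G : SimpleGraph V} (hconn : G.Connected) (σ : G ≃g G) (x y : V) :
    G.dist (σ x) (σ y) = G.dist x y := by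
  have key : ∀ (τ : G ≃g G) (a b : V), G.dist (τ a) (τ b) ≤ G.dist a b := by
    intro τ a b
    obtain ⟨p, hp⟩ := hconn.exists_walk_length_eq_dist a b
    calc G.dist (τ a) (τ b) ≤ (p.map τ.toHom).length := SimpleGraph.dist_le _
    _ = p.length := SimpleGraph.Walk.length_map _ _
    _ = G.dist a b := hp
  refine le_antisymm (key σ x y) ?_
  have := key σ.symm (σ x) (σ y)
  simpa using this

lemma exists_parent {G : SimpleGraph V} (hconn : G.Connected) {r v : V} {k : ℕ}
    (h : G.dist r v = k + 1) : ∃ u, G.Adj u v ∧ G.dist r u = k := by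
  obtain ⟨p, hp⟩ := hconn.exists_walk_length_eq_dist r v
  have hvr : v ≠ r := by
    rintro rfl
    rw [SimpleGraph.dist_self] at h; omega
  obtain ⟨u, hadj, q, hq⟩ := SimpleGraph.Walk.exists_eq_cons_of_ne hvr p.reverse
  have hlen : q.length = k := by
    have h1 : p.reverse.length = k + 1 := by
      rw [SimpleGraph.Walk.length_reverse, hp, h]
    rw [hq, SimpleGraph.Walk.length_cons] at h1
    omega
  have h1 : G.dist r u ≤ k := by
    have := SimpleGraph.dist_le q.reverse
    rwa [SimpleGraph.Walk.length_reverse, hlen] at this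
  have h2 : G.dist r v ≤ G.dist r u + 1 := by
    have htri := hconn.dist_triangle (u := r) (v := u) (w := v)
    have huv : G.dist u v ≤ 1 := by
      have := SimpleGraph.dist_le (SimpleGraph.Walk.cons hadj.symm SimpleGraph.Walk.nil)
      simpa using this
    omega
  exact ⟨u, hadj.symm, by omega⟩

end StmtSix

end StmtSixAux

section StmtSixAux2

namespace StmtSix

variable {V : Type*}

noncomputable def idx (G : SimpleGraph V) [Fintype V] (r u v : V) : ℕ := by
  classical
  exact if h : v ∈ DD G r u then ((Finite.equivFin ↥(DD G r u)) ⟨v, h⟩ : Fin _).val else 0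

lemma idx_lt (G : SimpleGraph V) [Fintype V] {r u v : V} (h : v ∈ DD G r u) :
    idx G r u v < Nat.card ↥(DD G r u) := by
  classical
  rw [idx]
  simp only [h, dif_pos]
  exact ((Finite.equivFin ↥(DD G r u)) ⟨v, h⟩).isLt

lemma idx_inj (G : SimpleGraph V) [Fintype V] {r u v w : V} (hv : v ∈ DD G r u)
    (hw : w ∈ DD G r u) (h : idx G r u v = idx G r u w) : v = w := by
  classical
  rw [idx, idx] at h
  simp only [hv, hw, dif_pos] at h
  have := (Finite.equivFin ↥(DD G r u)).injective (Fin.val_injective h)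
  exact congrArg Subtype.val this

lemma idx_symm_spec (G : SimpleGraph V) [Fintype V] {r u : V} {k : ℕ}
    (hk : k < Nat.card ↥(DD G r u)) :
    ((Finite.equivFin ↥(DD G r u)).symm ⟨k, hk⟩ : V) ∈ DD G r u ∧
      idx G r u ((Finite.equivFin ↥(DD G r u)).symm ⟨k, hk⟩ : V) = k := by
  classical
  set x := (Finite.equivFin ↥(DD G r u)).symm ⟨k, hk⟩ with hx
  refine ⟨x.2, ?_⟩
  rw [idx]
  simp only [x.2, dif_pos]
  have : (⟨(x : V), x.2⟩ : ↥(DD G r u)) = x := rfl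
  rw [this, hx, Equiv.apply_symm_apply]

open scoped Classical in
/-- The generic half-edge colouring. -/
noncomputable def fGen (G : SimpleGraph V) [Fintype V] (r : V) (d : ℕ) (hd : 0 < d) :
    V → V → Fin d := fun x y =>
  if y ∈ DD G r x then ⟨idx G r x y / d % d, Nat.mod_lt _ hd⟩
  else if x ∈ DD G r y then ⟨idx G r y x % d, Nat.mod_lt _ hd⟩
  else ⟨0, hd⟩

lemma fGen_down (G : SimpleGraph V) [Fintype V] {r u v : V} {d : ℕ} {hd : 0 < d}
    (h : v ∈ DD G r u) :
    fGen G r d hd u v = ⟨idx G r u v / d % d, Nat.mod_lt _ hd⟩ := by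
  rw [fGen]
  simp [h]

lemma fGen_up (G : SimpleGraph V) [Fintype V] {r u v : V} {d : ℕ} {hd : 0 < d}
    (h : v ∈ DD G r u) :
    fGen G r d hd v u = ⟨idx G r u v % d, Nat.mod_lt _ hd⟩ := by
  rw [fGen]
  simp [h, not_mem_DD_of_mem h]

lemma fGen_ne_zero (G : SimpleGraph V) [Fintype V] {r x y : V} {d : ℕ} {hd : 0 < d}
    (h : fGen G r d hd x y ≠ ⟨0, hd⟩) : y ∈ DD G r x ∨ x ∈ DD G r y := by
  by_contra hc
  push_neg at hc
  rw [fGen] at h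
  simp only [hc.1, hc.2, if_false] at h
  exact h rfl

lemma fGen_inj (G : SimpleGraph V) [Fintype V] {r u v w : V} {d : ℕ} {hd : 0 < d}
    (hcard : Nat.card ↥(DD G r u) ≤ d * d) (hv : v ∈ DD G r u) (hw : w ∈ DD G r u)
    (h1 : fGen G r d hd u v = fGen G r d hd u w)
    (h2 : fGen G r d hd v u = fGen G r d hd w u) : v = w := by
  rw [fGen_down G hv, fGen_down G hw] at h1
  rw [fGen_up G hv, fGen_up G hw] at h2
  have e1 : idx G r u v / d % d = idx G r u w / d % d := congrArg Fin.val h1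
  have e2 : idx G r u v % d = idx G r u w % d := congrArg Fin.val h2
  have bv : idx G r u v / d < d := (Nat.div_lt_iff_lt_mul hd).mpr (lt_of_lt_of_le (idx_lt G hv) hcard)
  have bw : idx G r u w / d < d := (Nat.div_lt_iff_lt_mul hd).mpr (lt_of_lt_of_le (idx_lt G hw) hcard)
  rw [Nat.mod_eq_of_lt bv, Nat.mod_eq_of_lt bw] at e1
  refine idx_inj G hv hw ?_
  calc idx G r u v = d * (idx G r u v / d) + idx G r u v % d := (Nat.div_add_mod _ _).symm
  _ = d * (idx G r u w / d) + idx G r u w % d := by rw [e1, e2]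
  _ = idx G r u w := Nat.div_add_mod _ _

lemma ncard_neighbor_le_maxDeg (G : SimpleGraph V) [Fintype V] (v : V) :
    (G.neighborSet v).ncard ≤ maxDeg G := by
  apply le_csSup
  · refine ⟨Fintype.card V, ?_⟩
    rintro k ⟨w, rfl⟩
    calc (G.neighborSet w).ncard ≤ (Set.univ : Set V).ncard :=
      Set.ncard_le_ncard (Set.subset_univ _) Set.finite_univ
    _ = Fintype.card V := by rw [Set.ncard_univ, Nat.card_eq_fintype_card]
  · exact ⟨v, rfl⟩

lemma maxDeg_le (G : SimpleGraph V) [Fintype V] [Nonempty V] {m : ℕ}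
    (h : ∀ v, (G.neighborSet v).ncard ≤ m) : maxDeg G ≤ m := by
  apply csSup_le
  · exact ⟨_, ⟨Classical.arbitrary V, rfl⟩⟩
  · rintro k ⟨v, rfl⟩; exact h v

lemma maxDeg_le_card (G : SimpleGraph V) [Fintype V] [Nonempty V] :
    maxDeg G ≤ Fintype.card V - 1 := by
  apply maxDeg_le
  intro v
  calc (G.neighborSet v).ncard ≤ (Set.univ \ {v} : Set V).ncard := by
        apply Set.ncard_le_ncard ?_ (Set.toFinite _)
        intro w hw
        exact ⟨Set.mem_univ _, fun h => G.irrefl (by rwa [Set.mem_singleton_iff.mp h] at hw)⟩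
  _ = Fintype.card V - 1 := by
        rw [Set.ncard_diff (Set.subset_univ _), Set.ncard_univ, Nat.card_eq_fintype_card,
          Set.ncard_singleton]

lemma two_le_maxDeg (G : SimpleGraph V) [Fintype V] (hconn : G.Connected)
    (hn : 3 ≤ Fintype.card V) : 2 ≤ maxDeg G := by
  classical
  have : ∃ v, 2 ≤ (G.neighborSet v).ncard := by
    by_contra hcon
    push_neg at hcon
    have hsmall : ∀ v, (G.neighborSet v).ncard ≤ 1 := fun v => by have := hcon v; omega
    have hne : Nonempty V := Fintype.card_pos_iff.mp (by omega)
    obtain ⟨x⟩ := hne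
    obtain ⟨y, hy⟩ := Fintype.exists_ne_of_one_lt_card (by omega) x
    obtain ⟨p⟩ := hconn x y
    obtain ⟨x', hadj, q, hq⟩ := SimpleGraph.Walk.exists_eq_cons_of_ne (Ne.symm hy) p
    have hclosed : ∀ (a b : V) (w : G.Walk a b), a = x ∨ a = x' → b = x ∨ b = x' := by
      intro a b w
      induction w with
      | nil => exact fun h => h
      | @cons a c b hac w ih =>
        intro ha
        apply ih
        rcases ha with rfl | rfl
        · right
          have h1 : c ∈ G.neighborSet a := hac
          have h2 : x' ∈ G.neighborSet a := hadj
          exact (Set.ncard_le_one (Set.toFinite _)).mp (hsmall a) _ h1 _ h2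
        · left
          have h1 : c ∈ G.neighborSet a := hac
          have h2 : x ∈ G.neighborSet a := hadj.symm
          exact (Set.ncard_le_one (Set.toFinite _)).mp (hsmall a) _ h1 _ h2
    obtain ⟨z, hz1, hz2⟩ := exists_ne_pair hn x x'
    obtain ⟨w⟩ := hconn x z
    rcases hclosed x z w (Or.inl rfl) with h | h
    · exact hz1 h
    · exact hz2 h
  obtain ⟨v, hv⟩ := this
  exact le_trans hv (ncard_neighbor_le_maxDeg G v)

lemma le_ceil_sqrt_sq (m : ℕ) : m ≤ ⌈Real.sqrt m⌉₊ * ⌈Real.sqrt m⌉₊ := by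
  have h0 : (0:ℝ) ≤ Real.sqrt m := Real.sqrt_nonneg _
  have h1 : Real.sqrt m ≤ (⌈Real.sqrt m⌉₊ : ℝ) := Nat.le_ceil _
  have h2 : (m:ℝ) ≤ ((⌈Real.sqrt m⌉₊ * ⌈Real.sqrt m⌉₊ : ℕ) : ℝ) := by
    push_cast
    calc (m:ℝ) = Real.sqrt m * Real.sqrt m := (Real.mul_self_sqrt (Nat.cast_nonneg m)).symm
    _ ≤ _ := mul_le_mul h1 h1 h0 (le_trans h0 h1)
  exact_mod_cast h2

lemma two_le_ceil_sqrt {m : ℕ} (h2 : 2 ≤ m) : 2 ≤ ⌈Real.sqrt m⌉₊ := by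
  have h : (1:ℝ) < Real.sqrt m := by
    have : Real.sqrt 1 < Real.sqrt m := by
      apply Real.sqrt_lt_sqrt (by norm_num)
      exact_mod_cast (by omega : 1 < m)
    simpa using this
  have := Nat.lt_ceil.mpr (show ((1:ℕ):ℝ) < Real.sqrt m by exact_mod_cast h)
  omega

lemma ceil_sqrt_add_two_le {m : ℕ} (h4 : 4 ≤ m) : ⌈Real.sqrt m⌉₊ + 2 ≤ m := by
  have key : ⌈Real.sqrt m⌉₊ ≤ m - 2 := by
    apply Nat.ceil_le.mpr
    have hcast : ((m - 2 : ℕ) : ℝ) = (m:ℝ) - 2 := by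
      have : 2 ≤ m := by omega
      push_cast [this]
      ring
    rw [hcast]
    have hm : (4:ℝ) ≤ (m:ℝ) := by exact_mod_cast h4
    calc Real.sqrt m ≤ Real.sqrt (((m:ℝ) - 2)^2) := Real.sqrt_le_sqrt (by nlinarith)
    _ = (m:ℝ) - 2 := Real.sqrt_sq (by nlinarith)
  omega

end StmtSix

end StmtSixAux2

section StmtSixMaster

namespace StmtSix

variable {V : Type*}

lemma iso_maps_inl [Fintype V] {G : SimpleGraph V} (hn : 4 ≤ Fintype.card V)
    (ψ : centralGraph G ≃g centralGraph G) (u : V) :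
    ∃ v : V, ψ (Sum.inl u) = Sum.inl v := by
  classical
  cases hψ : ψ (Sum.inl u) with
  | inl v => exact ⟨v, rfl⟩
  | inr e =>
    exfalso
    obtain ⟨a, b, c, hau, hbu, hcu, hab, hac, hbc⟩ := exists_three hn u
    obtain ⟨⟨x, y⟩, hxy⟩ := Quot.exists_rep (e : Sym2 V)
    set N : V → V ⊕ G.edgeSet := fun w =>
      if h : G.Adj u w then Sum.inr ⟨s(u, w), h⟩ else Sum.inl w with hN
    have hadjN : ∀ w, w ≠ u → (centralGraph G).Adj (Sum.inl u) (N w) := by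
      intro w hw
      rw [hN]
      by_cases h : G.Adj u w
      · simp only [dif_pos h]
        exact Sym2.mem_mk_left u w
      · simp only [dif_neg h]
        exact ⟨fun he => hw he.symm, h⟩
    have hNinj : ∀ w w', N w = N w' → w = w' := by
      intro w w' h
      rw [hN] at h
      simp only at h
      by_cases h1 : G.Adj u w
      · by_cases h2 : G.Adj u w'
        · rw [dif_pos h1, dif_pos h2] at h
          have h3 := Sum.inr.inj h
          exact Sym2.congr_right.mp (congrArg Subtype.val h3)
        · rw [dif_pos h1, dif_neg h2] at h
          exact absurd h (by simp)
      · by_cases h2 : G.Adj u w'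
        · rw [dif_neg h1, dif_pos h2] at h
          exact absurd h (by simp)
        · rw [dif_neg h1, dif_neg h2] at h
          exact Sum.inl.inj h
    have hmem : ∀ w, w ≠ u → ψ (N w) = Sum.inl x ∨ ψ (N w) = Sum.inl y := by
      intro w hw
      have hadj : (centralGraph G).Adj (ψ (Sum.inl u)) (ψ (N w)) :=
        ψ.map_rel_iff.mpr (hadjN w hw)
      rw [hψ] at hadj
      cases hz : ψ (N w) with
      | inr e' => rw [hz] at hadj; exact absurd hadj central_not_adj_rr
      | inl z =>
        rw [hz] at hadj
        have hz' : z ∈ (e : Sym2 V) := hadj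
        have hxy' : s(x, y) = (e : Sym2 V) := hxy
        rw [← hxy'] at hz'
        rcases Sym2.mem_iff.mp hz' with rfl | rfl
        · left; rfl
        · right; rfl
    rcases hmem a hau with h1 | h1 <;> rcases hmem b hbu with h2 | h2 <;>
      rcases hmem c hcu with h3 | h3
    · exact hab (hNinj a b (ψ.injective (h1.trans h2.symm)))
    · exact hab (hNinj a b (ψ.injective (h1.trans h2.symm)))
    · exact hac (hNinj a c (ψ.injective (h1.trans h3.symm)))
    · exact hbc (hNinj b c (ψ.injective (h2.trans h3.symm)))
    · exact hbc (hNinj b c (ψ.injective (h2.trans h3.symm)))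
    · exact hac (hNinj a c (ψ.injective (h1.trans h3.symm)))
    · exact hab (hNinj a b (ψ.injective (h1.trans h2.symm)))
    · exact hab (hNinj a b (ψ.injective (h1.trans h2.symm)))

lemma iso_maps_inr [Fintype V] {G : SimpleGraph V} (hn : 4 ≤ Fintype.card V)
    (ψ : centralGraph G ≃g centralGraph G) (e : G.edgeSet) :
    ∃ e' : G.edgeSet, ψ (Sum.inr e) = Sum.inr e' := by
  cases hψ : ψ (Sum.inr e) with
  | inr e' => exact ⟨e', rfl⟩
  | inl w =>
    obtain ⟨v, hv⟩ := iso_maps_inl hn ψ.symm w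
    have h1 : ψ.symm (ψ (Sum.inr e)) = Sum.inr e := ψ.symm_apply_apply _
    rw [hψ, hv] at h1
    exact absurd h1 (by simp)

lemma master [Fintype V] (G : SimpleGraph V) (hconn : G.Connected)
    (hn : 4 ≤ Fintype.card V) (d : ℕ) (hd : 0 < d) (r : V)
    (f : V → V → Fin d) (gS : Sym2 V → Fin d)
    (hinj : ∀ u v w, v ∈ DD G r u → w ∈ DD G r u →
      f u v = f u w → f v u = f w u → v = w)
    (hpin : ∀ σ : G ≃g G,
      (∀ u v : V, u ≠ v → ¬ G.Adj u v → gS s(σ u, σ v) = gS s(u, v)) →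
      (∀ u v : V, G.Adj u v → f (σ u) (σ v) = f u v) → σ r = r) :
    distinguishingIndex (centralGraph G) ≤ d := by
  classical
  apply Nat.sInf_le
  set H : V → G.edgeSet → Fin d := fun u e =>
    if h : u ∈ (e : Sym2 V) then f u (Sym2.Mem.other h) else ⟨0, hd⟩ with hH
  have Hcomp : ∀ (u v : V) (huv : G.Adj u v), H u ⟨s(u, v), huv⟩ = f u v := by
    intro u v huv
    rw [hH]
    have hm : u ∈ ((⟨s(u, v), huv⟩ : G.edgeSet) : Sym2 V) := Sym2.mem_mk_left u v
    simp only [dif_pos hm]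
    congr 1
    exact Sym2.congr_right.mp (Sym2.other_spec hm)
  set F : (V ⊕ G.edgeSet) → (V ⊕ G.edgeSet) → Fin d := fun x y =>
    match x, y with
    | Sum.inl u, Sum.inl v => gS s(u, v)
    | Sum.inl u, Sum.inr e => H u e
    | Sum.inr e, Sum.inl u => H u e
    | Sum.inr _, Sum.inr _ => ⟨0, hd⟩ with hFdef
  have hFsymm : ∀ x y, F x y = F y x := by
    rintro (u | e) (v | e') <;> simp only [hFdef]
    exact congrArg gS Sym2.eq_swap
  refine ⟨fun eb => Sym2.lift ⟨F, hFsymm⟩ eb.val, ?_⟩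
  intro φ hφ
  have FEq : ∀ x y, (centralGraph G).Adj x y → F (φ x) (φ y) = F x y := by
    intro x y hxy
    have h1 := hφ ⟨s(x, y), (centralGraph G).mem_edgeSet.mpr hxy⟩
    simp only [SimpleGraph.Iso.mapEdgeSet_apply, SimpleGraph.Hom.mapEdgeSet_coe,
      Sym2.map_pair_eq, Sym2.lift_mk] at h1
    exact h1
  have hmapl := fun u => iso_maps_inl hn φ u
  choose σf hσf using hmapl
  have hmapl' := fun u => iso_maps_inl hn φ.symm u
  choose σg hσg using hmapl'
  have hgf : ∀ u, σg (σf u) = u := by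
    intro u
    have h1 : φ.symm (φ (Sum.inl u)) = Sum.inl u := φ.symm_apply_apply _
    rw [hσf u, hσg (σf u)] at h1
    exact Sum.inl.inj h1
  have hfg : ∀ u, σf (σg u) = u := by
    intro u
    have h1 : φ (φ.symm (Sum.inl u)) = Sum.inl u := φ.apply_symm_apply _
    rw [hσg u, hσf (σg u)] at h1
    exact Sum.inl.inj h1
  set σE : V ≃ V := ⟨σf, σg, hgf, hfg⟩ with hσE
  have hσinj : Function.Injective σf := σE.injective
  have hadj_iff : ∀ u v : V, G.Adj (σf u) (σf v) ↔ G.Adj u v := by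
    intro u v
    by_cases huv : u = v
    · subst huv; simp
    have hne : σf u ≠ σf v := fun h => huv (hσinj h)
    have hC : (centralGraph G).Adj (Sum.inl (σf u)) (Sum.inl (σf v)) ↔
        (centralGraph G).Adj (Sum.inl u) (Sum.inl v) := by
      rw [← hσf u, ← hσf v]
      exact φ.map_rel_iff
    rw [central_adj_ll, central_adj_ll] at hC
    constructor
    · intro h
      by_contra hno
      exact (hC.mpr ⟨huv, hno⟩).2 h
    · intro h
      by_contra hno
      exact (hC.mp ⟨hne, hno⟩).2 h
  set σ : G ≃g G := ⟨σE, fun {a b} => hadj_iff a b⟩ with hσ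
  have hφinr : ∀ (u v : V) (huv : G.Adj u v),
      φ (Sum.inr ⟨s(u, v), huv⟩) = Sum.inr ⟨s(σf u, σf v), (hadj_iff u v).mpr huv⟩ := by
    intro u v huv
    obtain ⟨e', he'⟩ := iso_maps_inr hn φ ⟨s(u, v), huv⟩
    have h1 : (centralGraph G).Adj (Sum.inl (σf u)) (Sum.inr e') := by
      rw [← hσf u, ← he']
      exact φ.map_rel_iff.mpr (Sym2.mem_mk_left u v)
    have h2 : (centralGraph G).Adj (Sum.inl (σf v)) (Sum.inr e') := by
      rw [← hσf v, ← he']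
      exact φ.map_rel_iff.mpr (Sym2.mem_mk_right u v)
    have hne : σf u ≠ σf v := fun h => (G.ne_of_adj huv) (hσinj h)
    have h3 : (e' : Sym2 V) = s(σf u, σf v) :=
      (Sym2.mem_and_mem_iff hne).mp ⟨h1, h2⟩
    rw [he']
    congr 1
    exact Subtype.ext h3
  have hgpres : ∀ u v : V, u ≠ v → ¬ G.Adj u v → gS s(σf u, σf v) = gS s(u, v) := by
    intro u v hne hnadj
    have h := FEq (Sum.inl u) (Sum.inl v) ⟨hne, hnadj⟩
    rw [hσf u, hσf v] at h
    exact h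
  have hfpres : ∀ u v : V, G.Adj u v → f (σf u) (σf v) = f u v := by
    intro u v huv
    have h := FEq (Sum.inl u) (Sum.inr ⟨s(u, v), huv⟩) (Sym2.mem_mk_left u v)
    rw [hσf u, hφinr u v huv] at h
    have h2 : H (σf u) ⟨s(σf u, σf v), (hadj_iff u v).mpr huv⟩ = H u ⟨s(u, v), huv⟩ := h
    rw [Hcomp _ _ ((hadj_iff u v).mpr huv), Hcomp _ _ huv] at h2
    exact h2
  have hr : σf r = r := hpin σ (fun u v h1 h2 => hgpres u v h1 h2) (fun u v h => hfpres u v h)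
  have hdist : ∀ v, G.dist r (σf v) = G.dist r v := by
    intro v
    have h1 : G.dist (σf r) (σf v) = G.dist r v := dist_iso hconn σ r v
    rwa [hr] at h1
  have hfix : ∀ v, σf v = v := by
    have key : ∀ k v, G.dist r v = k → σf v = v := by
      intro k
      induction k using Nat.strong_induction_on with
      | _ k ih =>
        intro v hv
        rcases k with _ | k
        · have h1 : r = v := (hconn.dist_eq_zero_iff).mp hv
          rw [← h1, hr]
        · obtain ⟨u, hadj, hu⟩ := exists_parent hconn hv
          have hσu : σf u = u := ih k (Nat.lt_succ_self k) u hu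
          have h1 : v ∈ DD G r u := ⟨hadj, by rw [hv, hu]⟩
          have h2 : σf v ∈ DD G r u := by
            refine ⟨?_, ?_⟩
            · have := (hadj_iff u v).mpr hadj
              rwa [hσu] at this
            · rw [hdist v, hv, hu]
          refine hinj u (σf v) v h2 h1 ?_ ?_
          · have := hfpres u v hadj
            rwa [hσu] at this
          · have := hfpres v u hadj.symm
            rwa [hσu] at this
    exact fun v => key (G.dist r v) v rfl
  intro x
  cases x with
  | inl u => rw [hσf u, hfix u]
  | inr e =>
    obtain ⟨⟨u, v⟩, huv⟩ := Quot.exists_rep (e : Sym2 V)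
    have huv' : s(u, v) = (e : Sym2 V) := huv
    have hadj : G.Adj u v := by
      have h1 := e.2
      rw [← huv'] at h1
      exact G.mem_edgeSet.mp h1
    have he : e = ⟨s(u, v), hadj⟩ := Subtype.ext huv'.symm
    rw [he, hφinr u v hadj]
    congr 1
    apply Subtype.ext
    show s(σf u, σf v) = s(u, v)
    rw [hfix u, hfix v]

end StmtSix

end StmtSixMaster

section StmtSixFinal

open StmtSix

theorem stmt_6' {V : Type*} [Fintype V] (G : SimpleGraph V)
    (hconn : G.Connected) (hn : 4 ≤ Fintype.card V) :
    distinguishingIndex (centralGraph G) ≤ ⌈Real.sqrt (maxDeg G)⌉₊ := by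
  classical
  set d := ⌈Real.sqrt (maxDeg G)⌉₊ with hdeq
  haveI hne : Nonempty V := Fintype.card_pos_iff.mp (by omega)
  have hΔ2 : 2 ≤ maxDeg G := two_le_maxDeg G hconn (by omega)
  have hd2 : 2 ≤ d := two_le_ceil_sqrt hΔ2
  have hd : 0 < d := by omega
  have hsq : maxDeg G ≤ d * d := le_ceil_sqrt_sq _
  haveI : NeZero d := ⟨by omega⟩
  have h10 : (1 : Fin d) ≠ (0 : Fin d) := by
    intro h
    have h1 : (1 : Fin d).val = 1 := by
      rw [Fin.val_one', Nat.mod_eq_of_lt (by omega : 1 < d)]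
    rw [h] at h1
    simp at h1
  have hzero : ∀ (h : 0 < d), (⟨0, h⟩ : Fin d) = 0 := fun h => rfl
  have hcard : ∀ (r u : V), Nat.card ↥(DD G r u) ≤ d * d := by
    intro r u
    rw [Nat.card_coe_set_eq]
    calc (DD G r u).ncard ≤ (G.neighborSet u).ncard := by
          apply Set.ncard_le_ncard ?_ (Set.toFinite _)
          intro v hv
          exact hv.1
    _ ≤ maxDeg G := ncard_neighbor_le_maxDeg G u
    _ ≤ d * d := hsq
  have hinjG : ∀ (r : V), ∀ u v w, v ∈ DD G r u → w ∈ DD G r u →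
      fGen G r d hd u v = fGen G r d hd u w →
      fGen G r d hd v u = fGen G r d hd w u → v = w :=
    fun r u v w hv hw h1 h2 => fGen_inj G (hcard r u) hv hw h1 h2
  by_cases hC1 : ∃ (r y1 y2 : V), y1 ≠ y2 ∧ y1 ≠ r ∧ y2 ≠ r ∧ ¬G.Adj r y1 ∧ ¬G.Adj r y2
  · -- CASE 1 : some vertex has two non-neighbours
    obtain ⟨r, y1, y2, h12, h1r, h2r, hna1, hna2⟩ := hC1
    refine master G hconn hn d hd r (fGen G r d hd)
      (fun z => if r ∈ z then 1 else 0) (hinjG r) ?_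
    intro σ hg hf
    by_contra hσr
    have key : ∀ y, y ≠ r → ¬G.Adj r y → σ y = r := by
      intro y hyr hnad
      have h := hg r y (Ne.symm hyr) hnad
      rw [if_pos (Sym2.mem_mk_left r y)] at h
      by_cases hm : r ∈ s(σ r, σ y)
      · rcases Sym2.mem_iff.mp hm with h' | h'
        · exact absurd h'.symm hσr
        · exact h'.symm
      · rw [if_neg hm] at h
        exact absurd h.symm h10
    have e1 : σ y1 = r := key y1 h1r hna1
    have e2 : σ y2 = r := key y2 h2r hna2
    exact h12 (σ.injective (e1.trans e2.symm))
  · push_neg at hC1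
    have huniq : ∀ v y1 y2 : V, y1 ≠ v → y2 ≠ v → ¬G.Adj v y1 → ¬G.Adj v y2 → y1 = y2 := by
      intro v y1 y2 h1 h2 h3 h4
      by_contra hne'
      exact h4 (hC1 v y1 y2 hne' h1 h2 h3)
    by_cases hC2 : ∃ a b : V, a ≠ b ∧ ¬G.Adj a b
    · -- CASE 2a : complement is a nonempty matching
      obtain ⟨r, r', hrr', hnadj⟩ := hC2
      have hadjr : ∀ u, u ≠ r → u ≠ r' → G.Adj r u := by
        intro u hur hur'
        by_contra hno
        exact hur' (huniq r u r' hur (Ne.symm hrr') hno hnadj)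
      have hadjr' : ∀ u, u ≠ r → u ≠ r' → G.Adj r' u := by
        intro u hur hur'
        by_contra hno
        exact hur (huniq r' u r hur' hrr' hno (fun h => hnadj h.symm))
      have hdr1 : ∀ u, u ≠ r → u ≠ r' → G.dist r u = 1 :=
        fun u h1 h2 => SimpleGraph.dist_eq_one_iff_adj.mpr (hadjr u h1 h2)
      have hdr' : G.dist r r' = 2 := by
        obtain ⟨w, hw1, hw2⟩ := exists_ne_pair (by omega) r r'
        have hle : G.dist r r' ≤ 2 := by
          have := SimpleGraph.dist_le (SimpleGraph.Walk.cons (hadjr w hw1 hw2)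
            (SimpleGraph.Walk.cons (hadjr' w hw1 hw2).symm SimpleGraph.Walk.nil))
          simpa using this
        have h0 : G.dist r r' ≠ 0 := fun hc => hrr' ((hconn.dist_eq_zero_iff).mp hc)
        have h1 : G.dist r r' ≠ 1 := fun hc => hnadj (SimpleGraph.dist_eq_one_iff_adj.mp hc)
        omega
      have hDDr : DD G r r = {v | v ≠ r ∧ v ≠ r'} := by
        ext v
        simp only [mem_DD, Set.mem_setOf_eq, SimpleGraph.dist_self]
        constructor
        · rintro ⟨hadj, _⟩
          refine ⟨(G.ne_of_adj hadj).symm, ?_⟩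
          rintro rfl
          exact hnadj hadj
        · rintro ⟨h1, h2⟩
          exact ⟨hadjr v h1 h2, by rw [hdr1 v h1 h2]⟩
      have hDDu : ∀ u, u ≠ r → u ≠ r' → DD G r u = {r'} := by
        intro u h1 h2
        ext v
        simp only [mem_DD, Set.mem_singleton_iff]
        rw [hdr1 u h1 h2]
        constructor
        · rintro ⟨hadj, hdist⟩
          by_contra hvr'
          have hvr : v ≠ r := by
            rintro rfl
            rw [SimpleGraph.dist_self] at hdist; omega
          rw [hdr1 v hvr hvr'] at hdist; omega
        · rintro rfl
          exact ⟨(hadjr' u h1 h2).symm, by rw [hdr']⟩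
      have hcardr : Nat.card ↥(DD G r r) = Fintype.card V - 2 := by
        rw [Nat.card_coe_set_eq, hDDr]
        have hset : {v : V | v ≠ r ∧ v ≠ r'} = Set.univ \ {r, r'} := by
          ext v
          simp only [Set.mem_setOf_eq, Set.mem_diff, Set.mem_univ, true_and,
            Set.mem_insert_iff, Set.mem_singleton_iff]
          tauto
        rw [hset, Set.ncard_diff (Set.subset_univ _), Set.ncard_univ,
          Nat.card_eq_fintype_card, Set.ncard_pair hrr']
      refine master G hconn hn d hd r (fGen G r d hd)
        (fun z => if z = s(r, r') then 1 else 0) (hinjG r) ?_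
      intro σ hg hf
      have h := hg r r' hrr' hnadj
      simp only at h
      rw [if_true] at h
      have hset2 : s(σ r, σ r') = s(r, r') := by
        by_contra hc
        rw [if_neg hc] at h
        exact absurd h.symm h10
      rcases Sym2.eq_iff.mp hset2 with ⟨hr1, hr2⟩ | ⟨hr1, hr2⟩
      · exact hr1
      · exfalso
        have hlt1 : 1 < Nat.card ↥(DD G r r) := by rw [hcardr]; omega
        obtain ⟨hmem1, hidx1⟩ := idx_symm_spec G (r := r) (u := r) (k := 1) hlt1
        set u1 : V := (((Finite.equivFin ↥(DD G r r)).symm ⟨1, hlt1⟩ : ↥(DD G r r)) : V) with hu1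
        have hv1 : fGen G r d hd u1 r = ⟨1 % d, Nat.mod_lt _ hd⟩ := by
          rw [fGen_up G hmem1, hidx1]
        have hu1mem' : u1 ≠ r ∧ u1 ≠ r' := by
          have hcopy := hmem1
          rw [hDDr] at hcopy
          exact hcopy
        have hadj1 : G.Adj u1 r := (hadjr u1 hu1mem'.1 hu1mem'.2).symm
        have hpres := hf u1 r hadj1
        rw [hr1, hv1] at hpres
        have hσu1r : σ u1 ≠ r := by
          intro hcc
          exact hu1mem'.2 (σ.injective (hcc.trans hr2.symm))
        have hσu1r' : σ u1 ≠ r' := by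
          intro hcc
          exact hu1mem'.1 (σ.injective (hcc.trans hr1.symm))
        have hmem2 : r' ∈ DD G r (σ u1) := by
          rw [hDDu (σ u1) hσu1r hσu1r']; rfl
        have hidx0 : idx G r (σ u1) r' = 0 := by
          have hb := idx_lt G hmem2
          rw [Nat.card_coe_set_eq, hDDu (σ u1) hσu1r hσu1r', Set.ncard_singleton] at hb
          omega
        rw [fGen_down G hmem2, hidx0] at hpres
        have hfin : 0 / d % d = 1 % d := congrArg Fin.val hpres
        rw [Nat.zero_div, Nat.zero_mod, Nat.mod_eq_of_lt (by omega : 1 < d)] at hfin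
        exact absurd hfin (by omega)
    · -- CASE 2b : G is complete
      push_neg at hC2
      have r : V := Classical.arbitrary V
      have hadjall : ∀ u v : V, u ≠ v → G.Adj u v := hC2
      have hdall : ∀ u, u ≠ r → G.dist r u = 1 :=
        fun u h => SimpleGraph.dist_eq_one_iff_adj.mpr (hadjall r u (Ne.symm h))
      have hDDr : DD G r r = {v | v ≠ r} := by
        ext v
        simp only [mem_DD, Set.mem_setOf_eq, SimpleGraph.dist_self]
        constructor
        · rintro ⟨hadj, _⟩
          exact (G.ne_of_adj hadj).symm
        · intro h
          exact ⟨hadjall r v (Ne.symm h), by rw [hdall v h]⟩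
      have hDDu : ∀ u, u ≠ r → DD G r u = ∅ := by
        intro u hu
        ext v
        simp only [mem_DD, Set.mem_empty_iff_false, iff_false]
        rintro ⟨hadj, hdist⟩
        rw [hdall u hu] at hdist
        by_cases hv : v = r
        · subst hv
          rw [SimpleGraph.dist_self] at hdist; omega
        · rw [hdall v hv] at hdist; omega
      have hcardr : Nat.card ↥(DD G r r) = Fintype.card V - 1 := by
        rw [Nat.card_coe_set_eq, hDDr]
        have h2 : {v : V | v ≠ r} = Set.univ \ {r} := by ext v; simp
        rw [h2, Set.ncard_diff (Set.subset_univ _), Set.ncard_univ,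
          Nat.card_eq_fintype_card, Set.ncard_singleton]
      have hΔ : maxDeg G = Fintype.card V - 1 := by
        refine le_antisymm (maxDeg_le_card G) ?_
        have hns : G.neighborSet r = {v | v ≠ r} := by
          ext v
          simp only [SimpleGraph.mem_neighborSet, Set.mem_setOf_eq]
          constructor
          · intro h; exact (G.ne_of_adj h).symm
          · intro h; exact hadjall r v (Ne.symm h)
        have hcount : (G.neighborSet r).ncard = Fintype.card V - 1 := by
          rw [hns]
          have h2 : {v : V | v ≠ r} = Set.univ \ {r} := by ext v; simp
          rw [h2, Set.ncard_diff (Set.subset_univ _), Set.ncard_univ,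
            Nat.card_eq_fintype_card, Set.ncard_singleton]
        rw [← hcount]
        exact ncard_neighbor_le_maxDeg G r
      refine master G hconn hn d hd r (fGen G r d hd) (fun _ => 0) (hinjG r) ?_
      intro σ hg hf
      by_contra hσr
      have hkeyA : ∀ v, v ∈ DD G r r → fGen G r d hd v r ≠ ⟨0, hd⟩ → σ v = r := by
        intro v hv hne0
        have hadj : G.Adj v r := hv.1.symm
        have h := hf v r hadj
        have hne1 : fGen G r d hd (σ v) (σ r) ≠ ⟨0, hd⟩ := by rw [h]; exact hne0
        rcases fGen_ne_zero G hne1 with hc | hc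
        · have h1 := hc.2
          rw [hdall (σ r) hσr] at h1
          have h2 : G.dist r (σ v) = 0 := by omega
          exact ((hconn.dist_eq_zero_iff).mp h2).symm
        · rw [hDDu (σ r) hσr] at hc
          exact absurd hc (Set.notMem_empty _)
      have hkeyB : ∀ v, v ∈ DD G r r → fGen G r d hd r v ≠ ⟨0, hd⟩ → σ v = r := by
        intro v hv hne0
        have hadj : G.Adj r v := hv.1
        have h := hf r v hadj
        have hne1 : fGen G r d hd (σ r) (σ v) ≠ ⟨0, hd⟩ := by rw [h]; exact hne0
        rcases fGen_ne_zero G hne1 with hc | hc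
        · rw [hDDu (σ r) hσr] at hc
          exact absurd hc (Set.notMem_empty _)
        · have h1 := hc.2
          rw [hdall (σ r) hσr] at h1
          have h2 : G.dist r (σ v) = 0 := by omega
          exact ((hconn.dist_eq_zero_iff).mp h2).symm
      have hlt1 : 1 < Nat.card ↥(DD G r r) := by rw [hcardr]; omega
      obtain ⟨hmem1, hidx1⟩ := idx_symm_spec G (r := r) (u := r) (k := 1) hlt1
      set u1 : V := (((Finite.equivFin ↥(DD G r r)).symm ⟨1, hlt1⟩ : ↥(DD G r r)) : V) with hu1
      have hv1 : fGen G r d hd u1 r = ⟨1 % d, Nat.mod_lt _ hd⟩ := by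
        rw [fGen_up G hmem1, hidx1]
      have hne01 : fGen G r d hd u1 r ≠ ⟨0, hd⟩ := by
        rw [hv1]
        intro hc
        have hval : 1 % d = 0 := congrArg Fin.val hc
        rw [Nat.mod_eq_of_lt (by omega : 1 < d)] at hval
        exact absurd hval (by omega)
      have hσ1 : σ u1 = r := hkeyA u1 hmem1 hne01
      by_cases hm4 : 5 ≤ Fintype.card V
      · have hlt2 : d + 1 < Nat.card ↥(DD G r r) := by
          have hstep := ceil_sqrt_add_two_le (m := maxDeg G) (by omega)
          rw [hcardr]
          rw [← hdeq] at hstep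
          omega
        obtain ⟨hmem2, hidx2⟩ := idx_symm_spec G (r := r) (u := r) (k := d + 1) hlt2
        set u2 : V := (((Finite.equivFin ↥(DD G r r)).symm ⟨d + 1, hlt2⟩ : ↥(DD G r r)) : V) with hu2
        have hv2 : fGen G r d hd u2 r = ⟨(d + 1) % d, Nat.mod_lt _ hd⟩ := by
          rw [fGen_up G hmem2, hidx2]
        have hne02 : fGen G r d hd u2 r ≠ ⟨0, hd⟩ := by
          rw [hv2]
          intro hc
          have hval : (d + 1) % d = 0 := congrArg Fin.val hc
          rw [Nat.add_mod_left d 1, Nat.mod_eq_of_lt (by omega : 1 < d)] at hval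
          exact absurd hval (by omega)
        have hσ2 : σ u2 = r := hkeyA u2 hmem2 hne02
        have hu12 : u1 = u2 := σ.injective (hσ1.trans hσ2.symm)
        have hieq : idx G r r u1 = idx G r r u2 := by rw [hu12]
        rw [hidx1, hidx2] at hieq
        omega
      · -- n = 4, d = 2
        have hn4 : Fintype.card V = 4 := by omega
        have hΔ3 : maxDeg G = 3 := by rw [hΔ, hn4]
        have hd2' : d = 2 := by
          refine le_antisymm ?_ hd2
          rw [hdeq, hΔ3]
          apply Nat.ceil_le.mpr
          have h1 : Real.sqrt 3 ≤ 2 := by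
            nlinarith [Real.sq_sqrt (by norm_num : (0:ℝ) ≤ 3), Real.sqrt_nonneg 3]
          push_cast
          exact h1
        have hlt2 : 2 < Nat.card ↥(DD G r r) := by rw [hcardr]; omega
        obtain ⟨hmem2, hidx2⟩ := idx_symm_spec G (r := r) (u := r) (k := 2) hlt2
        set u2 : V := (((Finite.equivFin ↥(DD G r r)).symm ⟨2, hlt2⟩ : ↥(DD G r r)) : V) with hu2
        have hv2 : fGen G r d hd r u2 = ⟨2 / d % d, Nat.mod_lt _ hd⟩ := by
          rw [fGen_down G hmem2, hidx2]
        have hne02 : fGen G r d hd r u2 ≠ ⟨0, hd⟩ := by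
          rw [hv2]
          intro hc
          have hval : 2 / d % d = 0 := congrArg Fin.val hc
          rw [hd2'] at hval
          norm_num at hval
        have hσ2 : σ u2 = r := hkeyB u2 hmem2 hne02
        have hu12 : u1 = u2 := σ.injective (hσ1.trans hσ2.symm)
        have hieq : idx G r r u1 = idx G r r u2 := by rw [hu12]
        rw [hidx1, hidx2] at hieq
        omega

end StmtSixFinal

/-- For a connected graph `G` of order at least `4`,
`D'(C(G)) ≤ ⌈√Δ(G)⌉`. -/
theorem stmt_6 {V : Type*} [Fintype V] (G : SimpleGraph V)
    (hconn : G.Connected) (hn : 4 ≤ Fintype.card V) :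
    distinguishingIndex (centralGraph G) ≤ ⌈Real.sqrt (maxDeg G)⌉₊ := by
  exact stmt_6' G hconn hn
end
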